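/- Let c > 0 be a real number, let C be a real m × n matrix, let H₁,…,H_r be real n × m matrices, and let β₁,…,β_r ≥ 0 be real numbers. For a real symmetric positive semidefinite n × n matrix Ξ and a real symmetric positive semidefinite m × m matrix Θ such that F(Ξ,Θ) := Θ + (1 + c) C Ξ Cᵀ is positive definite, define V(Ξ,Θ) = (1 + c) Ξ − (1 + c)² Ξ Cᵀ F(Ξ,Θ)⁻¹ C Ξ + Σ_{ν=1}^{r} β_ν H_ν F(Ξ,Θ) H_νᵀ. If Ξ¹ ⪯ Ξ² and Θ¹ ⪯ Θ² (with F(Ξ¹,Θ¹) and F(Ξ²,Θ²) positive definite), then V(Ξ¹,Θ¹) ⪯ V(Ξ²,Θ²) in the Loewner order. -/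

import Mathlib

open Matrix

/-- The innovation-covariance matrix `F(Ξ, Θ) = Θ + (1 + c) C Ξ Cᵀ`. -/
noncomputable def innovMat {n m : ℕ} (c : ℝ) (C : Matrix (Fin m) (Fin n) ℝ)
    (Ξ : Matrix (Fin n) (Fin n) ℝ) (Θ : Matrix (Fin m) (Fin m) ℝ) :
    Matrix (Fin m) (Fin m) ℝ :=
  Θ + (1 + c) • (C * Ξ * Cᵀ)

/-- The minimized one-step update of the filtering-error covariance bound
`V(Ξ, Θ) = (1 + c) Ξ - (1 + c)² Ξ Cᵀ F(Ξ,Θ)⁻¹ C Ξ + Σ_ν β_ν H_ν F(Ξ,Θ) H_νᵀ`. -/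
noncomputable def updateBound {n m r : ℕ} (c : ℝ) (C : Matrix (Fin m) (Fin n) ℝ)
    (H : Fin r → Matrix (Fin n) (Fin m) ℝ) (β : Fin r → ℝ)
    (Ξ : Matrix (Fin n) (Fin n) ℝ) (Θ : Matrix (Fin m) (Fin m) ℝ) :
    Matrix (Fin n) (Fin n) ℝ :=
  (1 + c) • Ξ - ((1 + c) ^ 2) • (Ξ * Cᵀ * (innovMat c C Ξ Θ)⁻¹ * C * Ξ)
    + ∑ ν : Fin r, β ν • (H ν * innovMat c C Ξ Θ * (H ν)ᵀ)

lemma psd_smul {k : ℕ} {r : ℝ} (hr : 0 ≤ r) {A : Matrix (Fin k) (Fin k) ℝ}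
    (hA : A.PosSemidef) : (r • A).PosSemidef := by
  refine ⟨?_, fun x => ?_⟩
  · unfold Matrix.IsHermitian
    rw [conjTranspose_smul, hA.1]
    simp
  · exact (hA.smul hr).2 x

lemma psd_conj {k l : ℕ} {A : Matrix (Fin k) (Fin k) ℝ} (hA : A.PosSemidef)
    (B : Matrix (Fin l) (Fin k) ℝ) : (B * A * Bᵀ).PosSemidef := by
  rw [← conjTranspose_eq_transpose_of_trivial]
  exact hA.mul_mul_conjTranspose_same B


lemma completion {n m : ℕ} (a : ℝ) (C : Matrix (Fin m) (Fin n) ℝ)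
    (Ξ : Matrix (Fin n) (Fin n) ℝ) (F : Matrix (Fin m) (Fin m) ℝ)
    [Invertible F] (hΞ : Ξᵀ = Ξ) (hF : (F⁻¹)ᵀ = F⁻¹)
    (K : Matrix (Fin n) (Fin m) ℝ) :
    a • Ξ - (a ^ 2) • (Ξ * Cᵀ * F⁻¹ * C * Ξ)
      = a • Ξ - a • (K * (C * Ξ)) - a • (Ξ * Cᵀ * Kᵀ) + K * F * Kᵀ
        - (K - a • (Ξ * Cᵀ * F⁻¹)) * F * (K - a • (Ξ * Cᵀ * F⁻¹))ᵀ := by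
  simp only [Matrix.transpose_sub, Matrix.transpose_smul, Matrix.transpose_mul,
    Matrix.transpose_transpose, hΞ, hF, Matrix.sub_mul, Matrix.mul_sub,
    Matrix.smul_mul, Matrix.mul_smul, smul_smul, smul_sub, Matrix.mul_assoc,
    Matrix.mul_inv_cancel_left_of_invertible, Matrix.inv_mul_cancel_left_of_invertible]
  module

/-- Monotonicity of the minimized filtering-error covariance update in the Loewner
order: if `Ξ¹ ⪯ Ξ²` and `Θ¹ ⪯ Θ²` (all positive semidefinite, with both innovation
matrices positive definite), then `V(Ξ¹, Θ¹) ⪯ V(Ξ², Θ²)`. -/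
theorem updateBound_monotone
    {n m r : ℕ} (c : ℝ) (hc : 0 < c)
    (C : Matrix (Fin m) (Fin n) ℝ)
    (H : Fin r → Matrix (Fin n) (Fin m) ℝ)
    (β : Fin r → ℝ) (hβ : ∀ ν, 0 ≤ β ν)
    (Ξ₁ Ξ₂ : Matrix (Fin n) (Fin n) ℝ) (hΞ₁ : Ξ₁.PosSemidef) (hΞ₂ : Ξ₂.PosSemidef)
    (Θ₁ Θ₂ : Matrix (Fin m) (Fin m) ℝ) (hΘ₁ : Θ₁.PosSemidef) (hΘ₂ : Θ₂.PosSemidef)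
    (hF₁ : (innovMat c C Ξ₁ Θ₁).PosDef) (hF₂ : (innovMat c C Ξ₂ Θ₂).PosDef)
    (hΞ : (Ξ₂ - Ξ₁).PosSemidef) (hΘ : (Θ₂ - Θ₁).PosSemidef) :
    (updateBound c C H β Ξ₂ Θ₂ - updateBound c C H β Ξ₁ Θ₁).PosSemidef := by
  set a : ℝ := 1 + c with ha_def
  have ha : (0:ℝ) ≤ a := by dsimp [a]; linarith
  set F₁ := innovMat c C Ξ₁ Θ₁ with hF₁def
  set F₂ := innovMat c C Ξ₂ Θ₂ with hF₂def
  haveI := hF₁.isUnit.invertible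
  haveI := hF₂.isUnit.invertible
  -- symmetry facts
  have hΞ₁t : Ξ₁ᵀ = Ξ₁ := by
    have := hΞ₁.1; rwa [Matrix.IsHermitian, conjTranspose_eq_transpose_of_trivial] at this
  have hΞ₂t : Ξ₂ᵀ = Ξ₂ := by
    have := hΞ₂.1; rwa [Matrix.IsHermitian, conjTranspose_eq_transpose_of_trivial] at this
  have hF₁t : (F₁⁻¹)ᵀ = F₁⁻¹ := by
    have h := hF₁.isHermitian
    rw [Matrix.IsHermitian, conjTranspose_eq_transpose_of_trivial] at h
    rw [transpose_nonsing_inv, h]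
  have hF₂t : (F₂⁻¹)ᵀ = F₂⁻¹ := by
    have h := hF₂.isHermitian
    rw [Matrix.IsHermitian, conjTranspose_eq_transpose_of_trivial] at h
    rw [transpose_nonsing_inv, h]
  set K : Matrix (Fin n) (Fin m) ℝ := a • (Ξ₂ * Cᵀ * F₂⁻¹) with hK
  have key : updateBound c C H β Ξ₂ Θ₂ - updateBound c C H β Ξ₁ Θ₁ =
      a • ((1 - K * C) * (Ξ₂ - Ξ₁) * (1 - K * C)ᵀ) + K * (Θ₂ - Θ₁) * Kᵀ
        + (K - a • (Ξ₁ * Cᵀ * F₁⁻¹)) * F₁ * (K - a • (Ξ₁ * Cᵀ * F₁⁻¹))ᵀ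
        + ∑ ν : Fin r, β ν • (H ν * (F₂ - F₁) * (H ν)ᵀ) := by
    have hsum : (∑ ν : Fin r, β ν • (H ν * F₂ * (H ν)ᵀ))
        - (∑ ν : Fin r, β ν • (H ν * F₁ * (H ν)ᵀ))
        = ∑ ν : Fin r, β ν • (H ν * (F₂ - F₁) * (H ν)ᵀ) := by
      rw [← Finset.sum_sub_distrib]
      refine Finset.sum_congr rfl fun ν _ => ?_
      rw [Matrix.mul_sub, Matrix.sub_mul, smul_sub]
    have hFe : F₂ - F₁ = (Θ₂ - Θ₁) + a • (C * (Ξ₂ - Ξ₁) * Cᵀ) := by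
      rw [hF₁def, hF₂def, innovMat, innovMat, ← ha_def]
      rw [Matrix.mul_sub, Matrix.sub_mul, smul_sub]
      abel
    have hK2 : K - a • (Ξ₂ * Cᵀ * F₂⁻¹) = 0 := by rw [hK, sub_self]
    have e2 := completion a C Ξ₂ F₂ hΞ₂t hF₂t K
    have e1 := completion a C Ξ₁ F₁ hΞ₁t hF₁t K
    rw [hK2] at e2
    have hF2e : F₂ = F₁ + ((Θ₂ - Θ₁) + a • (C * (Ξ₂ - Ξ₁) * Cᵀ)) := by
      rw [← hFe]; abel
    rw [updateBound, updateBound, ← hF₁def, ← hF₂def, ← ha_def, e1, e2, ← hsum, hF2e]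
    simp only [Matrix.zero_mul, Matrix.mul_zero, sub_zero, Matrix.transpose_sub,
      Matrix.transpose_smul, Matrix.transpose_mul, Matrix.transpose_one,
      Matrix.transpose_transpose, hΞ₁t, hΞ₂t, hF₁t, Matrix.sub_mul, Matrix.mul_sub,
      Matrix.add_mul, Matrix.mul_add, Matrix.smul_mul, Matrix.mul_smul,
      smul_sub, smul_add, smul_smul, Matrix.one_mul, Matrix.mul_one, Matrix.mul_assoc]
    module
  have hFdiff : (F₂ - F₁).PosSemidef := by
    have hFe : F₂ - F₁ = (Θ₂ - Θ₁) + a • (C * (Ξ₂ - Ξ₁) * Cᵀ) := by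
      rw [hF₁def, hF₂def, innovMat, innovMat, ← ha_def]
      rw [Matrix.mul_sub, Matrix.sub_mul, smul_sub]
      abel
    rw [hFe]
    exact hΘ.add (psd_smul ha (psd_conj hΞ C))
  rw [key]
  refine (((psd_smul ha (psd_conj hΞ (1 - K * C))).add (psd_conj hΘ K)).add
    (psd_conj hF₁.posSemidef (K - a • (Ξ₁ * Cᵀ * F₁⁻¹)))).add ?_
  have h0 : (0 : Matrix (Fin n) (Fin n) ℝ).PosSemidef := Matrix.PosSemidef.zero
  refine Finset.sum_induction _ _ (fun p q hp hq => hp.add hq) h0 ?_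
  exact fun ν _ => psd_smul (hβ ν) (psd_conj hFdiff (H ν))
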